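/- The function K(s) = (1/s) log|(s+1)/(s−1)| defined for s > 0, s ≠ 1, is positive, strictly increasing on (0,1), and strictly decreasing on (1,∞). -/

import Mathlib

open Set

/-- The kernel of the odd-symmetrized logarithmic Biot–Savart law. -/
noncomputable def eulerK (s : ℝ) : ℝ := (1 / s) * Real.log |(s + 1) / (s - 1)|

private lemma hasDerivAt_log_shift (s c : ℝ) (h : s + c ≠ 0) :
    HasDerivAt (fun x : ℝ => Real.log (x + c)) (1 / (s + c)) s := by
  have h1 : HasDerivAt (fun x : ℝ => x + c) 1 s := by
    simpa using (hasDerivAt_id s).add_const c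
  simpa [Function.comp_def, one_div] using (Real.hasDerivAt_log h).comp s h1

private lemma hasDerivAt_log_one_sub (s : ℝ) (h : (1:ℝ) - s ≠ 0) :
    HasDerivAt (fun x : ℝ => Real.log (1 - x)) (-(1 / (1 - s))) s := by
  have h1 : HasDerivAt (fun x : ℝ => 1 - x) (-1) s := by
    simpa using (hasDerivAt_id s).const_sub 1
  have := (Real.hasDerivAt_log h).comp s h1
  simpa [Function.comp_def, one_div] using this

private lemma hasDerivAt_g (s : ℝ) (h1 : (0:ℝ) < 1 + s) (h2 : (0:ℝ) < 1 - s) :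
    HasDerivAt (fun x : ℝ => 2*x/(1-x^2) - (Real.log (x+1) - Real.log (1-x)))
      (4*s^2/(1-s^2)^2) s := by
  have hden : (1 : ℝ) - s^2 ≠ 0 := by nlinarith
  have hA : HasDerivAt (fun x : ℝ => 2*x/(1-x^2))
      ((2*(1-s^2) - 2*s*(-(2*s)))/(1-s^2)^2) s := by
    have hnum : HasDerivAt (fun x : ℝ => 2*x) 2 s := by
      simpa using (hasDerivAt_id s).const_mul 2
    have hd : HasDerivAt (fun x : ℝ => 1 - x^2) (-(2*s)) s := by
      simpa using (hasDerivAt_pow 2 s).const_sub 1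
    exact hnum.div hd hden
  have hB := (hasDerivAt_log_shift s 1 (by linarith)).fun_sub
    (hasDerivAt_log_one_sub s (by linarith))
  have h := hA.fun_sub hB
  refine h.congr_deriv ?_
  have hs1 : (1:ℝ) + s ≠ 0 := by linarith
  have hs2 : (1:ℝ) - s ≠ 0 := by linarith
  have : s + 1 = 1 + s := by ring
  rw [this]
  field_simp
  ring

private lemma key (s : ℝ) (hs : s ∈ Ioo (0:ℝ) 1) :
    Real.log (s+1) - Real.log (1-s) < 2*s/(1-s^2) := by
  set g : ℝ → ℝ := fun x => 2*x/(1-x^2) - (Real.log (x+1) - Real.log (1-x)) with hg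
  have hmono : StrictMonoOn g (Ico (0:ℝ) 1) := by
    apply strictMonoOn_of_deriv_pos (convex_Ico 0 1)
    · intro x hx
      have h1 : (0:ℝ) < 1 + x := by linarith [hx.1]
      have h2 : (0:ℝ) < 1 - x := by linarith [hx.2]
      exact (hasDerivAt_g x h1 h2).differentiableAt.continuousAt.continuousWithinAt
    · intro x hx
      rw [interior_Ico] at hx
      have h1 : (0:ℝ) < 1 + x := by linarith [hx.1]
      have h2 : (0:ℝ) < 1 - x := by linarith [hx.2]
      rw [(hasDerivAt_g x h1 h2).deriv]
      have hd : (0:ℝ) < 1 - x^2 := by nlinarith [hx.1, hx.2]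
      have hx0 : x ≠ 0 := ne_of_gt hx.1
      positivity
  have h0 : g 0 = 0 := by simp [hg]
  have hlt := hmono (by constructor <;> norm_num : (0:ℝ) ∈ Ico (0:ℝ) 1)
    (⟨hs.1.le, hs.2⟩ : s ∈ Ico (0:ℝ) 1) hs.1
  rw [h0] at hlt
  have : 0 < 2*s/(1-s^2) - (Real.log (s+1) - Real.log (1-s)) := by simpa [hg] using hlt
  linarith

private lemma eulerK_eq_Ioo (x : ℝ) (hx : x ∈ Ioo (0:ℝ) 1) :
    eulerK x = (1/x) * (Real.log (x+1) - Real.log (1-x)) := by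
  have h1 : (0:ℝ) < x + 1 := by linarith [hx.1]
  have h2 : x - 1 < 0 := by linarith [hx.2]
  have habs : |(x + 1) / (x - 1)| = (x+1)/(1-x) := by
    rw [abs_div, abs_of_pos h1, abs_of_neg h2]
    ring_nf
  rw [eulerK, habs, Real.log_div (by linarith) (by linarith)]

private lemma eulerK_eq_Ioi (x : ℝ) (hx : x ∈ Ioi (1:ℝ)) :
    eulerK x = (1/x) * (Real.log (x+1) - Real.log (x-1)) := by
  have hx1 : (1:ℝ) < x := hx
  have h1 : (0:ℝ) < x + 1 := by linarith
  have h2 : (0:ℝ) < x - 1 := by linarith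
  have habs : |(x + 1) / (x - 1)| = (x+1)/(x-1) := abs_of_pos (div_pos h1 h2)
  rw [eulerK, habs, Real.log_div (by linarith) (by linarith)]

private lemma hasDerivAt_eulerK_Ioo (s : ℝ) (hs : s ∈ Ioo (0:ℝ) 1) :
    HasDerivAt eulerK
      (-(s^2)⁻¹ * (Real.log (s+1) - Real.log (1-s)) + s⁻¹ * (1/(s+1) + 1/(1-s))) s := by
  have hs0 : s ≠ 0 := ne_of_gt hs.1
  have h1 : (0:ℝ) < s + 1 := by linarith [hs.1]
  have h2 : (0:ℝ) < 1 - s := by linarith [hs.2]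
  have hinv : HasDerivAt (fun x : ℝ => 1/x) (-(s^2)⁻¹) s := by
    simpa [one_div] using hasDerivAt_inv hs0
  have hL : HasDerivAt (fun x : ℝ => Real.log (x+1) - Real.log (1-x))
      (1/(s+1) + 1/(1-s)) s := by
    have := (hasDerivAt_log_shift s 1 (by linarith)).fun_sub (hasDerivAt_log_one_sub s h2.ne')
    simpa [sub_neg_eq_add] using this
  have hF := hinv.mul hL
  have heq : eulerK =ᶠ[nhds s] fun x => (1/x) * (Real.log (x+1) - Real.log (1-x)) := by
    filter_upwards [isOpen_Ioo.mem_nhds hs] with x hx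
    exact eulerK_eq_Ioo x hx
  have := hF.congr_of_eventuallyEq heq
  simpa [one_div] using this

private lemma hasDerivAt_eulerK_Ioi (s : ℝ) (hs : s ∈ Ioi (1:ℝ)) :
    HasDerivAt eulerK
      (-(s^2)⁻¹ * (Real.log (s+1) - Real.log (s-1)) + s⁻¹ * (1/(s+1) - 1/(s-1))) s := by
  have hs1 : (1:ℝ) < s := hs
  have hs0 : s ≠ 0 := by linarith
  have h1 : (0:ℝ) < s + 1 := by linarith
  have h2 : (0:ℝ) < s - 1 := by linarith
  have hinv : HasDerivAt (fun x : ℝ => 1/x) (-(s^2)⁻¹) s := by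
    simpa [one_div] using hasDerivAt_inv hs0
  have hL : HasDerivAt (fun x : ℝ => Real.log (x+1) - Real.log (x-1))
      (1/(s+1) - 1/(s-1)) s := by
    have ha := hasDerivAt_log_shift s 1 (by linarith)
    have hb := hasDerivAt_log_shift s (-1) (by intro h; apply h2.ne'; linarith)
    have := ha.fun_sub hb
    simpa [sub_eq_add_neg] using this
  have hF := hinv.mul hL
  have heq : eulerK =ᶠ[nhds s] fun x => (1/x) * (Real.log (x+1) - Real.log (x-1)) := by
    filter_upwards [isOpen_Ioi.mem_nhds hs] with x hx
    exact eulerK_eq_Ioi x hx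
  have := hF.congr_of_eventuallyEq heq
  simpa [one_div] using this

/-- `K` is positive, strictly increasing on `(0,1)` and strictly decreasing on `(1,∞)`. -/
theorem eulerK_monotonicity :
    (∀ s : ℝ, 0 < s → s ≠ 1 → 0 < eulerK s) ∧
      StrictMonoOn eulerK (Ioo 0 1) ∧ StrictAntiOn eulerK (Ioi 1) := by
  refine ⟨?_, ?_, ?_⟩
  · intro s hs hs1
    have hne : s - 1 ≠ 0 := fun h => hs1 (by linarith)
    have habs : |(s + 1) / (s - 1)| = (s + 1) / |s - 1| := by
      rw [abs_div, abs_of_pos (by linarith : (0:ℝ) < s + 1)]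
    have hlt : |s - 1| < s + 1 := by
      rw [abs_lt]
      constructor <;> [linarith; linarith]
    have h1 : (1:ℝ) < |(s + 1) / (s - 1)| := by
      rw [habs]
      rw [one_lt_div (abs_pos.mpr hne)]
      exact hlt
    exact mul_pos (by positivity) (Real.log_pos h1)
  · apply strictMonoOn_of_deriv_pos (convex_Ioo 0 1)
    · intro x hx
      exact (hasDerivAt_eulerK_Ioo x hx).differentiableAt.continuousAt.continuousWithinAt
    · intro x hx
      rw [interior_Ioo] at hx
      rw [(hasDerivAt_eulerK_Ioo x hx).deriv]
      have hx0 : 0 < x := hx.1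
      have h1 : (0:ℝ) < x + 1 := by linarith
      have h2 : (0:ℝ) < 1 - x := by linarith [hx.2]
      have hd : (0:ℝ) < 1 - x^2 := by nlinarith [hx.2]
      have hk := key x hx
      have hsum : 1/(x+1) + 1/(1-x) = 2/(1-x^2) := by
        field_simp
        ring
      rw [hsum]
      have hx2 : (0:ℝ) < x^2 := by positivity
      rw [show -(x^2)⁻¹ * (Real.log (x+1) - Real.log (1-x)) + x⁻¹ * (2/(1-x^2))
          = (2*x/(1-x^2) - (Real.log (x+1) - Real.log (1-x))) / x^2 by
        field_simp; ring]
      exact div_pos (by linarith) hx2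
  · apply strictAntiOn_of_deriv_neg (convex_Ioi 1)
    · intro x hx
      exact (hasDerivAt_eulerK_Ioi x hx).differentiableAt.continuousAt.continuousWithinAt
    · intro x hx
      rw [interior_Ioi] at hx
      rw [(hasDerivAt_eulerK_Ioi x hx).deriv]
      have hx1 : (1:ℝ) < x := hx
      have h1 : (0:ℝ) < x + 1 := by linarith
      have h2 : (0:ℝ) < x - 1 := by linarith
      have hlogpos : 0 < Real.log (x+1) - Real.log (x-1) := by
        have := Real.log_lt_log h2 (by linarith : x - 1 < x + 1)
        linarith
      have hdiff : 1/(x+1) - 1/(x-1) < 0 := by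
        rw [sub_neg]
        apply div_lt_div_of_pos_left one_pos h2
        linarith
      have hx2 : (0:ℝ) < x^2 := by positivity
      have t1 : -(x^2)⁻¹ * (Real.log (x+1) - Real.log (x-1)) < 0 := by
        apply mul_neg_of_neg_of_pos _ hlogpos
        simp [hx2.ne']
        positivity
      have t2 : x⁻¹ * (1/(x+1) - 1/(x-1)) < 0 :=
        mul_neg_of_pos_of_neg (by positivity) hdiff
      linarith
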